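/- Let ρ < 0 < μ and ε > 0. Set L = ln(−ρ/μ), A = √(L² + π²), and define m = (μ − ρ)/ε − k − A and k = −(1/(μ − ρ))·( 2·L·(ρ − μ)/A + (ρ/ε)·(μ − ρ − ε·A) ), and then l = (m·ρ + k·μ)/(μ − ρ), n = −ρ·μ·(k + m)/(μ − ρ), and t̂ = (μ − ρ)/ε − (k + m). Then t̂ = A > 0, l = (2/t̂)·L, and l² = 4·L²/(L² + π²) < 4; moreover the solution (x(t), y(t), z(t)) of the linear system x′ = l·x + n − y, y′ = x − z, z′ = ε with initial condition (x(0), y(0), z(0)) = (ρ, −m·ρ − ε, ρ + m·ε) satisfies (x(t̂), y(t̂), z(t̂)) = (μ, k·μ − ε, μ − k·ε). In addition, if m + l > 0 then x′(t) > 0 for all t ∈ [0, t̂], so x(t) ∈ [ρ, μ] on [0, t̂]. -/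

import Mathlib

set_option maxHeartbeats 2000000


/-- Lemma 3.1: with the stated choices of `k`, `m`, `l`, `n` and the
central flight time `t̂`, the solution of the central-region linear system starting
at the exit point of the attracting slow manifold reaches the entry point of the
repelling slow manifold at time `t̂`, and (if `m + l > 0`) `x` is increasing on
`[0, t̂]`, staying in `[ρ, μ]`. -/
theorem stmt9 (ρ μ ε L A m k l n th : ℝ)
    (hρ : ρ < 0) (hμ : 0 < μ) (hε : 0 < ε)
    (hL : L = Real.log (-ρ / μ))
    (hA : A = Real.sqrt (L ^ 2 + Real.pi ^ 2))
    (hk : k = -(1 / (μ - ρ)) * (2 * L * (ρ - μ) / A + (ρ / ε) * (μ - ρ - ε * A)))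
    (hm : m = (μ - ρ) / ε - k - A)
    (hl : l = (m * ρ + k * μ) / (μ - ρ))
    (hn : n = -ρ * μ * (k + m) / (μ - ρ))
    (hth : th = (μ - ρ) / ε - (k + m)) :
    th = A ∧ 0 < th ∧ l = (2 / th) * L ∧
    l ^ 2 = 4 * L ^ 2 / (L ^ 2 + Real.pi ^ 2) ∧ l ^ 2 < 4 ∧
    ∀ x y z : ℝ → ℝ,
      (∀ t, HasDerivAt x (l * x t + n - y t) t) →
      (∀ t, HasDerivAt y (x t - z t) t) →
      (∀ t, HasDerivAt z ε t) →
      x 0 = ρ → y 0 = -m * ρ - ε → z 0 = ρ + m * ε →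
      (x th = μ ∧ y th = k * μ - ε ∧ z th = μ - k * ε) ∧
      (0 < m + l → ∀ t ∈ Set.Icc (0 : ℝ) th,
        0 < l * x t + n - y t ∧ x t ∈ Set.Icc ρ μ) := by
  have hμρ : 0 < μ - ρ := by linarith
  have hμρne : μ - ρ ≠ 0 := ne_of_gt hμρ
  have hεne : ε ≠ 0 := ne_of_gt hε
  have hπ : 0 < Real.pi := Real.pi_pos
  have hA0 : 0 < A := by
    rw [hA]; apply Real.sqrt_pos.2; nlinarith [sq_nonneg L]
  have hAne : A ≠ 0 := ne_of_gt hA0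
  have hA2 : A ^ 2 = L ^ 2 + Real.pi ^ 2 := by
    rw [hA]; exact Real.sq_sqrt (by positivity)
  have hthA : th = A := by rw [hth, hm]; ring
  have hth0 : 0 < th := hthA ▸ hA0
  have hl2 : l = 2 * L / A := by
    rw [hl, hm, hk]; field_simp; ring
  have hlsq : l ^ 2 = 4 * L ^ 2 / (L ^ 2 + Real.pi ^ 2) := by
    rw [hl2, ← hA2]; field_simp; ring
  have hlsq4 : l ^ 2 < 4 := by
    rw [hlsq, div_lt_iff₀ (by positivity)]; nlinarith
  have hl' : l * (μ - ρ) = m * ρ + k * μ := by rw [hl]; field_simp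
  have hn' : n * (μ - ρ) = -ρ * μ * (k + m) := by rw [hn]; field_simp
  have hεA : ε * A = (μ - ρ) - (k + m) * ε := by rw [hm]; field_simp; ring
  have hP : (l + m) * ρ + n = 0 := by
    have h : ((l + m) * ρ + n) * (μ - ρ) = 0 := by linear_combination ρ * hl' + hn'
    rcases mul_eq_zero.1 h with h' | h'
    · exact h'
    · exact absurd h' hμρne
  have hlnk : l * μ + n = k * μ := by
    have h : (l * μ + n - k * μ) * (μ - ρ) = 0 := by linear_combination μ * hl' + hn'
    rcases mul_eq_zero.1 h with h' | h'
    · linarith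
    · exact absurd h' hμρne
  have heL : Real.exp L = -ρ / μ := by
    rw [hL]; exact Real.exp_log (div_pos (by linarith) hμ)
  refine ⟨hthA, hth0, by rw [hl2, hthA]; ring, hlsq, hlsq4, ?_⟩
  intro x y z hx hy hz hx0 hy0 hz0
  -- parameters of the explicit solution
  obtain ⟨a, ha⟩ : ∃ a : ℝ, a = L / A := ⟨_, rfl⟩
  obtain ⟨ω, hω⟩ : ∃ ω : ℝ, ω = Real.pi / A := ⟨_, rfl⟩
  have hω0 : 0 < ω := by rw [hω]; exact div_pos hπ hA0
  have hωne : ω ≠ 0 := ne_of_gt hω0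
  have haw : a ^ 2 + ω ^ 2 = 1 := by
    rw [ha, hω]; field_simp; linarith [hA2]
  have hla : l = 2 * a := by rw [hl2, ha]; ring
  have haA : a * A = L := by rw [ha]; field_simp
  have hωA : ω * A = Real.pi := by rw [hω]; field_simp
  obtain ⟨B, hB⟩ : ∃ B : ℝ, B = (m + l) * ε := ⟨_, rfl⟩
  -- explicit solution
  obtain ⟨X, hXdef⟩ : ∃ X : ℝ → ℝ, X = fun t => ρ + m * ε + l * ε + ε * t +
      B * (Real.exp (a * t) * ((a / ω) * Real.sin (ω * t) - Real.cos (ω * t))) := ⟨_, rfl⟩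
  obtain ⟨X', hX'def⟩ : ∃ X' : ℝ → ℝ,
      X' = fun t => ε + (B / ω) * (Real.exp (a * t) * Real.sin (ω * t)) := ⟨_, rfl⟩
  obtain ⟨Y, hYdef⟩ : ∃ Y : ℝ → ℝ, Y = fun t => l * X t + n - X' t := ⟨_, rfl⟩
  obtain ⟨Z, hZdef⟩ : ∃ Z : ℝ → ℝ, Z = fun t => ρ + m * ε + ε * t := ⟨_, rfl⟩
  have hYX' : ∀ t, X' t = l * X t + n - Y t := fun t => by simp only [hYdef]; ring
  -- basic derivative builders
  have hexp : ∀ c t : ℝ, HasDerivAt (fun t => Real.exp (c * t)) (c * Real.exp (c * t)) t := by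
    intro c t
    have h : HasDerivAt (fun t : ℝ => c * t) c t := by
      simpa using (hasDerivAt_id t).const_mul c
    convert h.exp using 1; ring
  have hsin : ∀ t : ℝ, HasDerivAt (fun t => Real.sin (ω * t)) (ω * Real.cos (ω * t)) t := by
    intro t
    have h : HasDerivAt (fun t : ℝ => ω * t) ω t := by
      simpa using (hasDerivAt_id t).const_mul ω
    simpa [Function.comp_def, mul_comm] using (Real.hasDerivAt_sin (ω * t)).comp t h
  have hcos : ∀ t : ℝ, HasDerivAt (fun t => Real.cos (ω * t)) (-(ω * Real.sin (ω * t))) t := by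
    intro t
    have h : HasDerivAt (fun t : ℝ => ω * t) ω t := by
      simpa using (hasDerivAt_id t).const_mul ω
    simpa [Function.comp_def, mul_comm] using (Real.hasDerivAt_cos (ω * t)).comp t h
  have hlin : ∀ c t : ℝ, HasDerivAt (fun t : ℝ => c + ε * t) ε t := by
    intro c t
    simpa using ((hasDerivAt_id t).const_mul ε).const_add c
  have hXd : ∀ t, HasDerivAt X (X' t) t := by
    intro t
    have h1 : HasDerivAt (fun t => (a / ω) * Real.sin (ω * t) - Real.cos (ω * t))
        ((a / ω) * (ω * Real.cos (ω * t)) - (-(ω * Real.sin (ω * t)))) t :=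
      ((hsin t).const_mul (a / ω)).sub (hcos t)
    have h2 := ((hexp a t).mul h1).const_mul B
    have h3 := (hlin (ρ + m * ε + l * ε) t).add h2
    have h4 : HasDerivAt X (ε + B * (a * Real.exp (a * t) *
        ((a / ω) * Real.sin (ω * t) - Real.cos (ω * t)) +
        Real.exp (a * t) * ((a / ω) * (ω * Real.cos (ω * t)) - (-(ω * Real.sin (ω * t)))))) t := by
      simp only [hXdef]
      exact h3
    convert h4 using 1
    simp only [hX'def]
    field_simp
    linear_combination (-(B * Real.exp (a * t) * Real.sin (ω * t))) * haw
  have hX'd : ∀ t, HasDerivAt X'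
      ((B / ω) * (a * Real.exp (a * t) * Real.sin (ω * t) +
        Real.exp (a * t) * (ω * Real.cos (ω * t)))) t := by
    intro t
    have h1 := (((hexp a t).mul (hsin t)).const_mul (B / ω)).const_add ε
    simpa [hX'def] using h1
  have hYd : ∀ t, HasDerivAt Y (X t - Z t) t := by
    intro t
    have h1 := (((hXd t).const_mul l).add_const n).sub (hX'd t)
    have h2 : HasDerivAt Y (l * X' t -
        (B / ω) * (a * Real.exp (a * t) * Real.sin (ω * t) +
          Real.exp (a * t) * (ω * Real.cos (ω * t)))) t := by
      simp only [hYdef]; exact h1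
    convert h2 using 1
    simp only [hXdef, hX'def, hZdef]
    rw [hla]; field_simp; ring
  have hZd : ∀ t, HasDerivAt Z ε t := by
    intro t; rw [hZdef]; exact hlin (ρ + m * ε) t
  -- z coincides with Z
  have hzZ : ∀ t, z t = Z t := by
    intro t
    have hd : ∀ s : ℝ, HasDerivAt (fun u => z u - Z u) 0 s := by
      intro s; have h := (hz s).sub (hZd s); rw [sub_self] at h; exact h
    have hc := is_const_of_deriv_eq_zero (𝕜 := ℝ)
      (fun s => (hd s).differentiableAt) (fun s => (hd s).deriv) t 0
    have h0 : z 0 - Z 0 = 0 := by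
      rw [hz0]; simp [hZdef]
    have : z t - Z t = 0 := by rw [hc]; exact h0
    linarith
  -- initial values of the explicit solution
  have hX0 : X 0 = ρ := by simp [hXdef, hB]; ring
  have hX'0 : X' 0 = ε := by simp [hX'def]
  have hY0 : Y 0 = -m * ρ - ε := by
    simp only [hYdef, hX0, hX'0]; linarith [hP]
  -- uniqueness via an energy argument
  obtain ⟨M, hM⟩ : ∃ M : ℝ, M = 2 * |l| := ⟨_, rfl⟩
  obtain ⟨G, hGdef⟩ : ∃ G : ℝ → ℝ,
      G = fun t => Real.exp (-M * t) * ((x t - X t) ^ 2 + (y t - Y t) ^ 2) := ⟨_, rfl⟩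
  have hGd : ∀ t, HasDerivAt G
      (Real.exp (-M * t) * (-M * ((x t - X t) ^ 2 + (y t - Y t) ^ 2) +
        (2 * (x t - X t) * (l * (x t - X t) - (y t - Y t)) +
         2 * (y t - Y t) * (x t - X t)))) t := by
    intro t
    have hdx : HasDerivAt (fun u => x u - X u) (l * (x t - X t) - (y t - Y t)) t := by
      have h := (hx t).sub (hXd t)
      have he : (l * x t + n - y t) - X' t = l * (x t - X t) - (y t - Y t) := by
        rw [hYX' t]; ring
      rwa [he] at h
    have hdy : HasDerivAt (fun u => y u - Y u) (x t - X t) t := by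
      have h := (hy t).sub (hYd t)
      have he : (x t - z t) - (X t - Z t) = x t - X t := by
        rw [hzZ t]; ring
      rwa [he] at h
    have hq1 : HasDerivAt (fun u => (x u - X u) ^ 2)
        (2 * (x t - X t) * (l * (x t - X t) - (y t - Y t))) t := by
      have := hdx.fun_pow 2
      exact this.congr_deriv (by norm_num)
    have hq2 : HasDerivAt (fun u => (y u - Y u) ^ 2)
        (2 * (y t - Y t) * (x t - X t)) t := by
      have := hdy.fun_pow 2
      exact this.congr_deriv (by norm_num)
    have := (hexp (-M) t).fun_mul (hq1.fun_add hq2)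
    rw [hGdef]; exact this.congr_deriv (by ring)
  have hGnonpos : ∀ t, deriv G t ≤ 0 := by
    intro t
    rw [(hGd t).deriv]
    have h1 : 0 ≤ (|l| - l) * (x t - X t) ^ 2 :=
      mul_nonneg (sub_nonneg.2 (le_abs_self l)) (sq_nonneg _)
    have h2 : 0 ≤ |l| * (y t - Y t) ^ 2 := mul_nonneg (abs_nonneg l) (sq_nonneg _)
    have h3 : 0 < Real.exp (-M * t) := Real.exp_pos _
    have h4 : -M * ((x t - X t) ^ 2 + (y t - Y t) ^ 2) +
        (2 * (x t - X t) * (l * (x t - X t) - (y t - Y t)) +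
         2 * (y t - Y t) * (x t - X t)) ≤ 0 := by
      have he : -M * ((x t - X t) ^ 2 + (y t - Y t) ^ 2) +
          (2 * (x t - X t) * (l * (x t - X t) - (y t - Y t)) +
           2 * (y t - Y t) * (x t - X t)) =
          -2 * ((|l| - l) * (x t - X t) ^ 2) - 2 * (|l| * (y t - Y t) ^ 2) := by
        rw [hM]; ring
      rw [he]; linarith
    exact mul_nonpos_of_nonneg_of_nonpos h3.le h4
  have hant : Antitone G :=
    antitone_of_deriv_nonpos (fun t => (hGd t).differentiableAt) hGnonpos
  have hG0 : G 0 = 0 := by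
    simp [hGdef, hx0, hX0, hy0, hY0]
  have hxy : ∀ t, 0 ≤ t → x t = X t ∧ y t = Y t := by
    intro t ht
    have h1 : G t ≤ 0 := by rw [← hG0]; exact hant ht
    have h2 : 0 < Real.exp (-M * t) := Real.exp_pos _
    simp only [hGdef] at h1
    have h3 : (x t - X t) ^ 2 + (y t - Y t) ^ 2 ≤ 0 := by
      rcases mul_nonpos_iff.mp h1 with ⟨_, hb⟩ | ⟨ha, _⟩
      · exact hb
      · linarith
    have h4 : (x t - X t) ^ 2 = 0 :=
      le_antisymm (by linarith [sq_nonneg (y t - Y t)]) (sq_nonneg _)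
    have h5 : (y t - Y t) ^ 2 = 0 :=
      le_antisymm (by linarith [sq_nonneg (x t - X t)]) (sq_nonneg _)
    constructor
    · have := sq_eq_zero_iff.mp h4; linarith
    · have := sq_eq_zero_iff.mp h5; linarith
  -- values at time th
  have hexpth : Real.exp (a * th) = -ρ / μ := by
    rw [hthA, haA, heL]
  have hsinth : Real.sin (ω * th) = 0 := by rw [hthA, hωA, Real.sin_pi]
  have hcosth : Real.cos (ω * th) = -1 := by rw [hthA, hωA, Real.cos_pi]
  have hXth : X th = μ := by
    simp only [hXdef, hexpth, hsinth, hcosth, hB]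
    rw [hthA]
    linear_combination hεA + (ε * μ⁻¹) * hl' + ((k - l) * ε) * mul_inv_cancel₀ (ne_of_gt hμ)
  have hX'th : X' th = ε := by
    simp only [hX'def, hexpth, hsinth]; ring
  have hYth : Y th = k * μ - ε := by
    simp only [hYdef, hXth, hX'th]; linarith [hlnk]
  have hZth : Z th = μ - k * ε := by
    simp only [hZdef]; rw [hthA]; linarith [hεA]
  have hxth : x th = μ := by rw [(hxy th hth0.le).1, hXth]
  have hyth : y th = k * μ - ε := by rw [(hxy th hth0.le).2, hYth]
  have hzth : z th = μ - k * ε := by rw [hzZ th, hZth]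
  refine ⟨⟨hxth, hyth, hzth⟩, ?_⟩
  -- monotonicity part
  intro hml
  have hB0 : 0 < B := by rw [hB]; positivity
  have hpos : ∀ t ∈ Set.Icc (0 : ℝ) th, 0 < l * x t + n - y t := by
    intro t ht
    obtain ⟨ht0, ht1⟩ := ht
    obtain ⟨hxX, hyY⟩ := hxy t ht0
    have hXx : l * x t + n - y t = X' t := by rw [hxX, hyY, hYX' t]
    rw [hXx]
    have hs : 0 ≤ Real.sin (ω * t) := by
      apply Real.sin_nonneg_of_nonneg_of_le_pi (mul_nonneg hω0.le ht0)
      calc ω * t ≤ ω * th := mul_le_mul_of_nonneg_left ht1 hω0.le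
        _ = Real.pi := by rw [hthA, hωA]
    have he : 0 < Real.exp (a * t) := Real.exp_pos _
    have h5 : 0 ≤ (B / ω) * (Real.exp (a * t) * Real.sin (ω * t)) :=
      mul_nonneg (div_nonneg hB0.le hω0.le) (mul_nonneg he.le hs)
    simp only [hX'def]; linarith
  have hmono : StrictMonoOn x (Set.Icc 0 th) := by
    apply strictMonoOn_of_deriv_pos (convex_Icc 0 th)
    · exact fun s _ => ((hx s).differentiableAt).continuousAt.continuousWithinAt
    · intro s hs
      rw [interior_Icc] at hs
      rw [(hx s).deriv]
      exact hpos s ⟨hs.1.le, hs.2.le⟩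
  intro t ht
  refine ⟨hpos t ht, ?_, ?_⟩
  · have := hmono.monotoneOn (Set.left_mem_Icc.2 hth0.le) ht ht.1
    rw [hx0] at this; exact this
  · have := hmono.monotoneOn ht (Set.right_mem_Icc.2 hth0.le) ht.2
    rw [hxth] at this; exact this
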